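/- arXiv:1806.11559 — 9 statements merged into one kernel-verified Lean document; each statement's English description precedes it below -/
import Mathlib

section
/- Resource invariant along b-consistent computations: Let M be an RB-CGS#, A a coalition of agents, F_A a strategy for A, b = (b_a)_{a∈A} a resource bound, and λ a computation from a state s that is consistent with F_A and b-consistent. Then for every agent a ∈ A and every position 1 ≤ i ≤ |λ|, the resource availability vector satisfies e_a(λ[i]) ≥ 0 componentwise and its first (diminishing-resource) component satisfies e_{a,1}(λ[i]) ≤ b_{a,1} − (i − 1). -/
/-- A resource-bounded concurrent game structure with a diminishing resource (RB-CGS#). -/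
structure RBCGS (Agt S Act Res : Type) where
  /-- available actions for each agent in each state -/
  d : S → Agt → Set Act
  d_ne : ∀ s a, (d s a).Nonempty
  /-- cost function (negative = consumption, positive = production) -/
  cost : S → Act → Res → ℤ
  /-- the distinguished diminishing resource (the "first" resource) -/
  res1 : Res
  /-- every available action consumes at least one unit of the diminishing resource -/
  cost_first : ∀ s (a : Agt) (α : Act), α ∈ d s a → cost s α res1 ≤ -1
  /-- partial transition function on joint actions -/
  tr : S → (Agt → Act) → Option S

namespace RBCGS

variable {Agt S Act Res : Type}

/-- consumption of resource ρ by action α at state s : `|min(0, c(s,α))|`. -/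
def consR (M : RBCGS Agt S Act Res) (s : S) (α : Act) (ρ : Res) : ℕ :=
  (min 0 (M.cost s α ρ)).natAbs

/-- production of resource ρ by action α at state s : `max(0, c(s,α))`. -/
def prodR (M : RBCGS Agt S Act Res) (s : S) (α : Act) (ρ : Res) : ℕ :=
  (max 0 (M.cost s α ρ)).toNat

/-- σ is a (projection of a) joint action for coalition A at state s. -/
def JointAt (M : RBCGS Agt S Act Res) (A : Set Agt) (s : S) (σ : Agt → Act) : Prop :=
  ∀ a ∈ A, σ a ∈ M.d s a

/-- outcomes of a joint action of coalition A at state s. -/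
def outA (M : RBCGS Agt S Act Res) (A : Set Agt) (s : S) (σA : Agt → Act) : Set S :=
  { s' | ∃ σ : Agt → Act, (∀ a, σ a ∈ M.d s a) ∧ (∀ a ∈ A, σ a = σA a) ∧
    M.tr s σ = some s' }

variable [Inhabited S]

/-- F is a strategy for coalition A : on every nonempty history it prescribes a joint
action available to A at the last state of the history. -/
def Strategy (M : RBCGS Agt S Act Res) (A : Set Agt) (F : List S → Agt → Act) : Prop :=
  ∀ l : List S, l ≠ [] → M.JointAt A (l.getD (l.length - 1) default) (F l)

/-- l is a (finite, nonempty) computation starting at s consistent with strategy F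
(the computation `λ[1..k]` is represented 0-based as `l[0..k-1]`). -/
def ConsistentFrom (M : RBCGS Agt S Act Res) (A : Set Agt) (F : List S → Agt → Act)
    (s : S) (l : List S) : Prop :=
  l ≠ [] ∧ l.getD 0 default = s ∧
    ∀ i, i + 1 < l.length →
      l.getD (i + 1) default ∈ M.outA A (l.getD i default) (F (l.take (i + 1)))

/-- `eAvail M F b l i a ρ` is the amount `e_a(λ[i+1])` of resource ρ available to a
after i steps of l under strategy F with initial bound b. -/
def eAvail (M : RBCGS Agt S Act Res) (F : List S → Agt → Act)
    (b : Agt → Res → ℕ) (l : List S) : ℕ → Agt → Res → ℤ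
  | 0 => fun a ρ => (b a ρ : ℤ)
  | i + 1 => fun a ρ =>
      eAvail M F b l i a ρ
        - (M.consR (l.getD i default) (F (l.take (i + 1)) a) ρ : ℤ)
        + (M.prodR (l.getD i default) (F (l.take (i + 1)) a) ρ : ℤ)

/-- l is b-consistent with strategy F for coalition A. -/
def BConsistent (M : RBCGS Agt S Act Res) (A : Set Agt) (F : List S → Agt → Act)
    (b : Agt → Res → ℕ) (l : List S) : Prop :=
  ∀ a ∈ A, ∀ i, i + 1 < l.length → ∀ ρ,
    (M.consR (l.getD i default) (F (l.take (i + 1)) a) ρ : ℤ) ≤ M.eAvail F b l i a ρ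

/-- l is a b-maximal computation from s consistent with F. -/
def BMaximal (M : RBCGS Agt S Act Res) (A : Set Agt) (F : List S → Agt → Act)
    (b : Agt → Res → ℕ) (s : S) (l : List S) : Prop :=
  M.ConsistentFrom A F s l ∧ M.BConsistent A F b l ∧
    ¬ ∃ l' : List S, l <+: l' ∧ l.length < l'.length ∧
        M.ConsistentFrom A F s l' ∧ M.BConsistent A F b l'

/-- `out(s, F_A, b)` : the set of b-maximal computations from s consistent with F. -/
def outSet (M : RBCGS Agt S Act Res) (A : Set Agt) (F : List S → Agt → Act)
    (b : Agt → Res → ℕ) (s : S) : Set (List S) :=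
  { l | M.BMaximal A F b s l }

end RBCGS

/-- Resource invariant along b-consistent computations: availability is
componentwise nonnegative, and on the diminishing resource it decreases by at least one
per step (`e_{a,1}(λ[i]) ≤ b_{a,1} − (i−1)`, here 0-based: index i stands for λ[i+1]). -/
theorem resource_invariant {Agt S Act Res : Type} [Inhabited S]
    (M : RBCGS Agt S Act Res) (A : Set Agt) (F : List S → Agt → Act)
    (hF : M.Strategy A F) (b : Agt → Res → ℕ) (s : S) (l : List S)
    (hcons : M.ConsistentFrom A F s l) (hb : M.BConsistent A F b l) :
    ∀ a ∈ A, ∀ i < l.length,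
      (∀ ρ : Res, 0 ≤ M.eAvail F b l i a ρ) ∧
        M.eAvail F b l i a M.res1 ≤ (b a M.res1 : ℤ) - i := by
  intro a ha i
  induction i with
  | zero =>
    intro _
    refine ⟨fun ρ => by simp [RBCGS.eAvail], by simp [RBCGS.eAvail]⟩
  | succ i ih =>
    intro hi1
    have hi : i < l.length := Nat.lt_of_succ_lt hi1
    obtain ⟨hnn, hres⟩ := ih hi
    -- the action is available
    have hlen : (l.take (i + 1)).length = i + 1 := by
      simp [List.length_take]; omega
    have htake_ne : l.take (i + 1) ≠ [] := by
      apply List.ne_nil_of_length_pos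
      omega
    have hlast : (l.take (i + 1)).getD ((l.take (i + 1)).length - 1) default
        = l.getD i default := by
      rw [hlen]
      simp only [Nat.add_sub_cancel]
      simp [List.getD, List.getElem?_take, hi]
    have hmem : F (l.take (i + 1)) a ∈ M.d (l.getD i default) a := by
      have := hF (l.take (i + 1)) htake_ne a ha
      rwa [hlast] at this
    have hcost := M.cost_first (l.getD i default) a (F (l.take (i + 1)) a) hmem
    have hbi := hb a ha i hi1
    constructor
    · intro ρ
      have hρ := hbi ρ
      simp only [RBCGS.eAvail]
      have hp : (0:ℤ) ≤ (M.prodR (l.getD i default) (F (l.take (i + 1)) a) ρ : ℤ) :=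
        Int.natCast_nonneg _
      omega
    · have hcons1 : (1:ℤ) ≤
          (M.consR (l.getD i default) (F (l.take (i + 1)) a) M.res1 : ℤ) := by
        unfold RBCGS.consR
        have hmin : min 0 (M.cost (l.getD i default) (F (l.take (i + 1)) a) M.res1)
            = M.cost (l.getD i default) (F (l.take (i + 1)) a) M.res1 :=
          min_eq_right (by omega)
        rw [hmin]
        omega
      have hprod0 : (M.prodR (l.getD i default) (F (l.take (i + 1)) a) M.res1 : ℤ)
          = 0 := by
        unfold RBCGS.prodR
        have : max 0 (M.cost (l.getD i default) (F (l.take (i + 1)) a) M.res1) = 0 :=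
          max_eq_left (by omega)
        rw [this]; simp
      simp only [RBCGS.eAvail]
      push_cast
      omega
end

section
/- Length bound from the diminishing resource: Let M be an RB-CGS#, A a nonempty coalition, F_A a strategy for A, and b = (b_a)_{a∈A} a resource bound. Then every computation λ from a state s that is consistent with F_A and b-consistent satisfies |λ| ≤ (min_{a∈A} b_{a,1}) + 1, where b_{a,1} is agent a's bound on the first (diminishing) resource. -/
/-- Length bound from the diminishing resource:
every computation consistent with F and b-consistent has length at most
`min_{a∈A} b_{a,1} + 1`. -/
theorem length_bound {Agt S Act Res : Type} [Inhabited S]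
    (M : RBCGS Agt S Act Res) (A : Set Agt) (hA : A.Nonempty)
    (F : List S → Agt → Act) (hF : M.Strategy A F)
    (b : Agt → Res → ℕ) (s : S) (l : List S)
    (hcons : M.ConsistentFrom A F s l) (hb : M.BConsistent A F b l) :
    l.length ≤ sInf ((fun a => b a M.res1) '' A) + 1 := by
  obtain ⟨a, haA, hba⟩ : ∃ a ∈ A, b a M.res1 = sInf ((fun a => b a M.res1) '' A) := by
    have := Nat.sInf_mem (hA.image (fun a => b a M.res1))
    obtain ⟨a, ha, h⟩ := this
    exact ⟨a, ha, h⟩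
  -- key: at each step the action is available, hence consumes ≥ 1 and produces 0 on res1
  have key : ∀ i, i + 1 ≤ l.length →
      (1 ≤ (M.consR (l.getD i default) (F (l.take (i + 1)) a) M.res1 : ℤ)) ∧
      (M.prodR (l.getD i default) (F (l.take (i + 1)) a) M.res1 : ℤ) = 0 := by
    intro i hi
    have hlen : (l.take (i + 1)).length = i + 1 := by
      simp [List.length_take]; omega
    have hne : l.take (i + 1) ≠ [] := by
      intro h
      rw [h] at hlen
      simp at hlen
    have hmem := hF (l.take (i + 1)) hne a haA
    have hget : (l.take (i + 1)).getD ((l.take (i + 1)).length - 1) default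
        = l.getD i default := by
      rw [hlen]
      simp only [Nat.add_sub_cancel]
      simp [List.getD, List.getElem?_take]
    rw [hget] at hmem
    have hcost := M.cost_first _ _ _ hmem
    constructor
    · unfold RBCGS.consR
      have : min 0 (M.cost (l.getD i default) (F (l.take (i + 1)) a) M.res1)
          = M.cost (l.getD i default) (F (l.take (i + 1)) a) M.res1 :=
        min_eq_right (by omega)
      rw [this]
      omega
    · unfold RBCGS.prodR
      have : max 0 (M.cost (l.getD i default) (F (l.take (i + 1)) a) M.res1) = 0 :=
        max_eq_left (by omega)
      rw [this]; simp
  have dec : ∀ i, i < l.length → M.eAvail F b l i a M.res1 ≤ (b a M.res1 : ℤ) - i := by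
    intro i
    induction i with
    | zero => intro _; simp [RBCGS.eAvail]
    | succ i ih =>
      intro hi
      have h1 := ih (by omega)
      obtain ⟨hc, hp⟩ := key i (by omega)
      simp only [RBCGS.eAvail]
      rw [hp]
      push_cast
      omega
  rcases Nat.lt_or_ge l.length 2 with h2 | h2
  · omega
  · have hlast := hb a haA (l.length - 2) (by omega) M.res1
    have hd := dec (l.length - 2) (by omega)
    obtain ⟨hc, _⟩ := key (l.length - 2) (by omega)
    have : (1 : ℤ) ≤ (b a M.res1 : ℤ) - (l.length - 2 : ℕ) := le_trans hc (le_trans hlast hd)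
    omega
end

section
/- Finiteness of the set of b-maximal outcomes: Let M be an RB-CGS# (with S finite), A a nonempty coalition, F_A a strategy for A, b a resource bound, and s a state. Then the set out(s, F_A, b) of b-maximal computations from s consistent with F_A is finite. -/
lemma eAvail_bound {Agt S Act Res : Type} [Inhabited S]
    (M : RBCGS Agt S Act Res) (A : Set Agt)
    (F : List S → Agt → Act) (hF : M.Strategy A F)
    (b : Agt → Res → ℕ) (l : List S) (hl : l ≠ [])
    {a : Agt} (ha : a ∈ A) :
    ∀ i, i < l.length → M.eAvail F b l i a M.res1 ≤ (b a M.res1 : ℤ) - i := by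
  intro i
  induction i with
  | zero => intro _; simp [RBCGS.eAvail]
  | succ i ih =>
    intro hi
    have hi' : i < l.length := Nat.lt_of_succ_lt hi
    have hmem : F (l.take (i + 1)) a ∈ M.d (l.getD i default) a := by
      have hne : l.take (i + 1) ≠ [] := by
        intro h
        have := congrArg List.length h
        simp [Nat.min_eq_left (Nat.le_of_lt hi)] at this
      have := hF (l.take (i + 1)) hne a ha
      have hlen : (l.take (i + 1)).length = i + 1 := by
        simp [Nat.min_eq_left (Nat.le_of_lt hi)]
      have hget : (l.take (i + 1)).getD ((l.take (i + 1)).length - 1) default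
          = l.getD i default := by
        rw [hlen]
        simp [List.getD_eq_getElem?_getD, List.getElem?_take, Nat.lt_succ_self i]
      rwa [hget] at this
    have hcost := M.cost_first _ _ _ hmem
    have hcons : (1 : ℤ) ≤ (M.consR (l.getD i default) (F (l.take (i + 1)) a) M.res1 : ℤ) := by
      unfold RBCGS.consR
      have h0 : min 0 (M.cost (l.getD i default) (F (l.take (i + 1)) a) M.res1)
          = M.cost (l.getD i default) (F (l.take (i + 1)) a) M.res1 :=
        min_eq_right (by omega)
      rw [h0]
      omega
    have hprod : M.prodR (l.getD i default) (F (l.take (i + 1)) a) M.res1 = 0 := by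
      unfold RBCGS.prodR
      have : max 0 (M.cost (l.getD i default) (F (l.take (i + 1)) a) M.res1) = 0 :=
        max_eq_left (by omega)
      simp only [this, Int.toNat_zero]
    have := ih hi'
    show M.eAvail F b l i a M.res1
        - (M.consR (l.getD i default) (F (l.take (i + 1)) a) M.res1 : ℤ)
        + (M.prodR (l.getD i default) (F (l.take (i + 1)) a) M.res1 : ℤ)
        ≤ (b a M.res1 : ℤ) - (i + 1 : ℕ)
    rw [hprod]
    push_cast
    omega

lemma bconsistent_length_le {Agt S Act Res : Type} [Inhabited S]
    (M : RBCGS Agt S Act Res) (A : Set Agt)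
    (F : List S → Agt → Act) (hF : M.Strategy A F)
    (b : Agt → Res → ℕ) (l : List S) (hl : l ≠ [])
    {a : Agt} (ha : a ∈ A) (hbc : M.BConsistent A F b l) :
    l.length ≤ b a M.res1 + 1 := by
  by_contra h
  push_neg at h
  set i := l.length - 2 with hi
  have h2 : 2 ≤ l.length := by omega
  have hi1 : i + 1 < l.length := by omega
  have hc := hbc a ha i hi1 M.res1
  have he := eAvail_bound M A F hF b l hl ha i (by omega)
  have hmem : F (l.take (i + 1)) a ∈ M.d (l.getD i default) a := by
    have hne : l.take (i + 1) ≠ [] := by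
      intro h'
      have := congrArg List.length h'
      simp [Nat.min_eq_left (Nat.le_of_lt hi1)] at this
    have := hF (l.take (i + 1)) hne a ha
    have hlen : (l.take (i + 1)).length = i + 1 := by
      simp [Nat.min_eq_left (Nat.le_of_lt hi1)]
    have hget : (l.take (i + 1)).getD ((l.take (i + 1)).length - 1) default
        = l.getD i default := by
      rw [hlen]
      simp [List.getD_eq_getElem?_getD, List.getElem?_take, Nat.lt_succ_self i]
    rwa [hget] at this
  have hcost := M.cost_first _ _ _ hmem
  have hcons : (1 : ℤ) ≤ (M.consR (l.getD i default) (F (l.take (i + 1)) a) M.res1 : ℤ) := by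
    unfold RBCGS.consR
    have h0 : min 0 (M.cost (l.getD i default) (F (l.take (i + 1)) a) M.res1)
        = M.cost (l.getD i default) (F (l.take (i + 1)) a) M.res1 :=
      min_eq_right (by omega)
    rw [h0]
    omega
  have : (1 : ℤ) ≤ (b a M.res1 : ℤ) - i := le_trans hcons (le_trans hc he)
  have : (i : ℤ) + 1 ≤ (b a M.res1 : ℤ) := by omega
  omega

/-- Finiteness of the set of b-maximal outcomes (S finite). -/
theorem outSet_finite {Agt S Act Res : Type} [Inhabited S] [Fintype S]
    (M : RBCGS Agt S Act Res) (A : Set Agt) (hA : A.Nonempty)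
    (F : List S → Agt → Act) (hF : M.Strategy A F)
    (b : Agt → Res → ℕ) (s : S) :
    (M.outSet A F b s).Finite := by
  obtain ⟨a, ha⟩ := hA
  apply Set.Finite.subset (List.finite_length_le S (b a M.res1 + 1))
  intro l hl
  exact bconsistent_length_le M A F hF b l hl.1.1 ha hl.2.1
end

section
/- Existence of b-maximal extensions: Let M be an RB-CGS#, A a nonempty coalition, F_A a strategy for A, b a resource bound, and s a state. Then every computation from s that is consistent with F_A and b-consistent is a prefix of some computation in out(s, F_A, b); in particular, out(s, F_A, b) is nonempty (every computation consistent with the strategy eventually runs out of the diminishing resource or reaches a state with no defined successor). -/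
/-- Existence of b-maximal extensions: every computation from s consistent
with F and b-consistent is a prefix of some member of out(s, F_A, b); in particular
out(s, F_A, b) is nonempty. -/
theorem exists_bmaximal_extension {Agt S Act Res : Type} [Inhabited S]
    (M : RBCGS Agt S Act Res) (A : Set Agt) (hA : A.Nonempty)
    (F : List S → Agt → Act) (hF : M.Strategy A F)
    (b : Agt → Res → ℕ) (s : S) :
    (∀ l : List S, M.ConsistentFrom A F s l → M.BConsistent A F b l →
        ∃ l' ∈ M.outSet A F b s, l <+: l') ∧
      (M.outSet A F b s).Nonempty := by
  obtain ⟨a0, ha0⟩ := hA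
  -- availability of the strategy's action along any computation
  have hact : ∀ l : List S, ∀ i, i + 1 ≤ l.length →
      F (l.take (i+1)) a0 ∈ M.d (l.getD i default) a0 := by
    intro l i hi
    have htake : (l.take (i+1)).length = i + 1 := by
      simp [List.length_take]; omega
    have hne : l.take (i+1) ≠ [] := by
      intro h0; rw [h0] at htake; simp at htake
    have hav := hF (l.take (i+1)) hne a0 ha0
    rw [htake] at hav
    have hgd : (l.take (i+1)).getD (i + 1 - 1) default = l.getD i default := by
      simp [List.getD_eq_getElem?_getD, List.getElem?_take]
    rwa [hgd] at hav
  have hcons1 : ∀ l : List S, ∀ i, i + 1 ≤ l.length →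
      (1 : ℤ) ≤ (M.consR (l.getD i default) (F (l.take (i+1)) a0) M.res1 : ℤ) := by
    intro l i hi
    have hc := M.cost_first _ a0 _ (hact l i hi)
    have : (M.consR (l.getD i default) (F (l.take (i+1)) a0) M.res1 : ℤ)
        = -(M.cost (l.getD i default) (F (l.take (i+1)) a0) M.res1) := by
      unfold RBCGS.consR
      rw [min_eq_right (by omega : M.cost (l.getD i default) (F (l.take (i+1)) a0) M.res1 ≤ 0)]
      omega
    omega
  have hprod0 : ∀ l : List S, ∀ i, i + 1 ≤ l.length →
      M.prodR (l.getD i default) (F (l.take (i+1)) a0) M.res1 = 0 := by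
    intro l i hi
    have hc := M.cost_first _ a0 _ (hact l i hi)
    unfold RBCGS.prodR
    rw [max_eq_left (by omega : M.cost (l.getD i default) (F (l.take (i+1)) a0) M.res1 ≤ 0)]
    rfl
  have hkey : ∀ l : List S, ∀ i, i ≤ l.length →
      M.eAvail F b l i a0 M.res1 ≤ (b a0 M.res1 : ℤ) - i := by
    intro l i
    induction i with
    | zero => intro _; simp [RBCGS.eAvail]
    | succ i ih =>
      intro hi
      have h1 := ih (by omega)
      have h2 := hcons1 l i hi
      have h3 := hprod0 l i hi
      show M.eAvail F b l i a0 M.res1 - _ + _ ≤ _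
      rw [h3]
      push_cast
      omega
  have hbound : ∀ l : List S, M.ConsistentFrom A F s l → M.BConsistent A F b l →
      l.length ≤ b a0 M.res1 + 1 := by
    intro l hc hb
    by_contra h
    push_neg at h
    set i := b a0 M.res1 with hi
    have hi1 : i + 1 < l.length := by omega
    have h1 := hb a0 ha0 i hi1 M.res1
    have h2 := hcons1 l i (by omega)
    have h3 := hkey l i (by omega)
    omega
  have main : ∀ n : ℕ, ∀ l : List S, b a0 M.res1 + 2 - l.length ≤ n →
      M.ConsistentFrom A F s l → M.BConsistent A F b l →
      ∃ l' ∈ M.outSet A F b s, l <+: l' := by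
    intro n
    induction n with
    | zero =>
      intro l hn hc hb
      exact absurd (hbound l hc hb) (by omega)
    | succ n ih =>
      intro l hn hc hb
      by_cases hmax : ∃ l' : List S, l <+: l' ∧ l.length < l'.length ∧
          M.ConsistentFrom A F s l' ∧ M.BConsistent A F b l'
      · obtain ⟨l', hp, hlen, hc', hb'⟩ := hmax
        have hbl := hbound l hc hb
        obtain ⟨l'', h1, h2⟩ := ih l' (by omega) hc' hb'
        exact ⟨l'', h1, hp.trans h2⟩
      · exact ⟨l, ⟨hc, hb, hmax⟩, List.prefix_refl l⟩
  constructor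
  · intro l hc hb
    exact main _ l le_rfl hc hb
  · have hc : M.ConsistentFrom A F s [s] := by
      refine ⟨by simp, rfl, ?_⟩
      intro i hi
      simp at hi
    have hb' : M.BConsistent A F b [s] := by
      intro a _ i hi
      simp at hi
    obtain ⟨l', hl', _⟩ := main _ [s] le_rfl hc hb'
    exact ⟨l', hl'⟩
end

section
/- One-step characterization of the Next modality (correctness of the Pre computation): Let M be an RB-CGS#, A a nonempty coalition, b a resource bound, s a state, and φ a formula of RB±ATL#. Then M, s ⊨ ⟨⟨A^b⟩⟩○φ if and only if there exists a joint action σ_A ∈ D_A(s) such that cons(s, (σ_A)_a) ≤ b_a componentwise for every a ∈ A, out(s, σ_A) is nonempty, and M, s' ⊨ φ for every s' ∈ out(s, σ_A). -/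
/-- Formulas of RB±ATL#. -/
inductive RBForm (Agt Res P : Type) : Type 1 where
  | prop : P → RBForm Agt Res P
  | neg : RBForm Agt Res P → RBForm Agt Res P
  | or : RBForm Agt Res P → RBForm Agt Res P → RBForm Agt Res P
  | nxt : Set Agt → (Agt → Res → ℕ) → RBForm Agt Res P → RBForm Agt Res P
  | untl : Set Agt → (Agt → Res → ℕ) → RBForm Agt Res P → RBForm Agt Res P → RBForm Agt Res P
  | rls : Set Agt → (Agt → Res → ℕ) → RBForm Agt Res P → RBForm Agt Res P → RBForm Agt Res P

namespace RBCGS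

variable {Agt S Act Res P : Type} [Inhabited S]

/-- Truth of an RB±ATL# formula at a state of an RB-CGS#, given a valuation V. -/
def Sat (M : RBCGS Agt S Act Res) (V : P → S → Prop) :
    RBForm Agt Res P → S → Prop
  | .prop p, s => V p s
  | .neg φ, s => ¬ Sat M V φ s
  | .or φ ψ, s => Sat M V φ s ∨ Sat M V ψ s
  | .nxt A b φ, s => ∃ F, M.Strategy A F ∧
      ∀ l ∈ M.outSet A F b s, 2 ≤ l.length ∧ Sat M V φ (l.getD 1 default)
  | .untl A b φ ψ, s => ∃ F, M.Strategy A F ∧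
      ∀ l ∈ M.outSet A F b s, ∃ i < l.length,
        Sat M V ψ (l.getD i default) ∧ ∀ j < i, Sat M V φ (l.getD j default)
  | .rls A b φ ψ, s => ∃ F, M.Strategy A F ∧
      ∀ l ∈ M.outSet A F b s,
        (∃ i < l.length, Sat M V φ (l.getD i default) ∧
          ∀ j ≤ i, Sat M V ψ (l.getD j default)) ∨
        (∀ j < l.length, Sat M V ψ (l.getD j default))

end RBCGS

/-- All coalitions occurring in the formula are nonempty. -/
def RBForm.goodCoal {Agt Res P : Type} : RBForm Agt Res P → Prop
  | .prop _ => True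
  | .neg φ => φ.goodCoal
  | .or φ ψ => φ.goodCoal ∧ ψ.goodCoal
  | .nxt A _ φ => A.Nonempty ∧ φ.goodCoal
  | .untl A _ φ ψ => A.Nonempty ∧ φ.goodCoal ∧ ψ.goodCoal
  | .rls A _ φ ψ => A.Nonempty ∧ φ.goodCoal ∧ ψ.goodCoal

section Aux

private lemma nat_exists_max' {P : ℕ → Prop} {B m : ℕ} (hb : ∀ n, P n → n ≤ B) (h : P m) :
    ∃ n, P n ∧ ∀ k, P k → k ≤ n := by
  classical
  exact ⟨Nat.findGreatest P B, Nat.findGreatest_spec (hb m h) h,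
    fun k hk => Nat.le_findGreatest (hb k hk) hk⟩

variable {Agt S Act Res : Type} [Inhabited S]

private lemma take_one_eq {s : S} {l : List S} (h0 : l.getD 0 default = s)
    (hl : l ≠ []) : l.take 1 = [s] := by
  cases l with
  | nil => simp at hl
  | cons x t => simp at h0 ⊢; exact h0

namespace RBCGS

omit [Inhabited S] in
private lemma consR_res1 (M : RBCGS Agt S Act Res) {s : S} {a : Agt} {α : Act}
    (h : α ∈ M.d s a) : 1 ≤ M.consR s α M.res1 := by
  have hc := M.cost_first s a α h
  unfold consR
  have : min 0 (M.cost s α M.res1) = M.cost s α M.res1 := min_eq_right (by omega)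
  rw [this]
  omega

omit [Inhabited S] in
private lemma prodR_res1 (M : RBCGS Agt S Act Res) {s : S} {a : Agt} {α : Act}
    (h : α ∈ M.d s a) : M.prodR s α M.res1 = 0 := by
  have hc := M.cost_first s a α h
  unfold prodR
  have : max 0 (M.cost s α M.res1) = 0 := max_eq_left (by omega)
  rw [this]; rfl

private lemma availAction (M : RBCGS Agt S Act Res) {A : Set Agt}
    {F : List S → Agt → Act} (hF : M.Strategy A F) {l : List S} {i : ℕ}
    (hi : i < l.length) {a : Agt} (ha : a ∈ A) :
    F (l.take (i+1)) a ∈ M.d (l.getD i default) a := by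
  have hlen : (l.take (i+1)).length = i + 1 := by
    simp [List.length_take]; omega
  have hne : l.take (i+1) ≠ [] := by
    intro h; rw [h] at hlen; simp at hlen
  have := hF (l.take (i+1)) hne a ha
  rw [hlen] at this
  simpa [List.getD_eq_getElem?_getD, List.getElem?_take, Nat.lt_succ_self] using this

private lemma eAvail_bound (M : RBCGS Agt S Act Res) {A : Set Agt}
    {F : List S → Agt → Act} (hF : M.Strategy A F) {b : Agt → Res → ℕ}
    {l : List S} {a : Agt} (ha : a ∈ A) :
    ∀ i < l.length, M.eAvail F b l i a M.res1 ≤ (b a M.res1 : ℤ) - i := by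
  intro i
  induction i with
  | zero => intro _; simp [eAvail]
  | succ i ih =>
    intro hi
    have hi' : i < l.length := by omega
    have hav := M.availAction hF hi' ha
    have h1 := M.consR_res1 hav
    have h2 := M.prodR_res1 hav
    have := ih hi'
    simp only [eAvail, h2]
    push_cast
    omega

private lemma length_bound (M : RBCGS Agt S Act Res) {A : Set Agt}
    {F : List S → Agt → Act} (hF : M.Strategy A F) {b : Agt → Res → ℕ}
    {l : List S} {a : Agt} (ha : a ∈ A) (hbc : M.BConsistent A F b l) :
    l.length ≤ b a M.res1 + 2 := by
  by_contra h
  push_neg at h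
  set i := l.length - 2 with hidef
  have hi1 : i + 1 < l.length := by omega
  have hi : i < l.length := by omega
  have hcle := hbc a ha i hi1 M.res1
  have hav := M.availAction hF hi ha
  have h1 := M.consR_res1 hav
  have h2 := M.eAvail_bound (b := b) hF ha i hi
  have h3 : (1 : ℤ) ≤ (M.consR (l.getD i default) (F (l.take (i+1)) a) M.res1 : ℤ) := by
    exact_mod_cast h1
  omega

end RBCGS

end Aux

/-- One-step characterization of the Next modality (correctness of Pre). -/
theorem next_characterization {Agt S Act Res P : Type} [Inhabited S]
    (M : RBCGS Agt S Act Res) (V : P → S → Prop)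
    (A : Set Agt) (hA : A.Nonempty) (b : Agt → Res → ℕ) (s : S)
    (φ : RBForm Agt Res P) :
    M.Sat V (.nxt A b φ) s ↔
      ∃ σA : Agt → Act, (∀ a ∈ A, σA a ∈ M.d s a) ∧
        (∀ a ∈ A, ∀ ρ : Res, M.consR s (σA a) ρ ≤ b a ρ) ∧
        (M.outA A s σA).Nonempty ∧
        ∀ s' ∈ M.outA A s σA, M.Sat V φ s' := by
  classical
  constructor
  · rintro ⟨F, hF, hout⟩
    have hs1 : ([s] : List S) ≠ [] := by simp
    have hcf1 : M.ConsistentFrom A F s [s] := ⟨hs1, rfl, by intro i hi; simp at hi⟩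
    have hbc1 : M.BConsistent A F b [s] := by intro a ha i hi; simp at hi
    have hmemF : ∀ (_ : ¬ ∃ l', [s] <+: l' ∧ ([s] : List S).length < l'.length ∧
        M.ConsistentFrom A F s l' ∧ M.BConsistent A F b l'), False := by
      intro hnx
      have h := (hout [s] ⟨hcf1, hbc1, hnx⟩).1
      simp at h
    have hcons : ∀ a ∈ A, ∀ ρ, M.consR s (F [s] a) ρ ≤ b a ρ := by
      by_contra h
      push_neg at h
      obtain ⟨a, ha, ρ, hlt⟩ := h
      apply hmemF
      rintro ⟨l', hpre, hlen, hcf', hbc'⟩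
      have h2 : 2 ≤ l'.length := by simp at hlen; omega
      have ht : l'.take 1 = [s] := take_one_eq hcf'.2.1 hcf'.1
      have hle := hbc' a ha 0 (by omega) ρ
      simp only [zero_add] at hle
      rw [hcf'.2.1, ht] at hle
      simp only [RBCGS.eAvail] at hle
      omega
    have hne' : (M.outA A s (F [s])).Nonempty := by
      by_contra h
      apply hmemF
      rintro ⟨l', hpre, hlen, hcf', hbc'⟩
      have h2 : 2 ≤ l'.length := by simp at hlen; omega
      have ht : l'.take 1 = [s] := take_one_eq hcf'.2.1 hcf'.1
      have hstep := hcf'.2.2 0 (by omega)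
      simp only [zero_add] at hstep
      rw [hcf'.2.1, ht] at hstep
      exact h ⟨_, hstep⟩
    have hj : M.JointAt A s (F [s]) := by
      have := hF [s] hs1
      simpa using this
    refine ⟨F [s], hj, hcons, hne', ?_⟩
    intro s' hs'
    have hcf0 : M.ConsistentFrom A F s [s, s'] := by
      refine ⟨by simp, rfl, ?_⟩
      intro i hi
      have hi0 : i = 0 := by simp at hi; omega
      subst hi0
      simpa using hs'
    have hbc0 : M.BConsistent A F b [s, s'] := by
      intro a ha i hi ρ
      have hi0 : i = 0 := by simp at hi; omega
      subst hi0
      simp only [RBCGS.eAvail]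
      have := hcons a ha ρ
      simp only [zero_add, List.take_succ_cons, List.take_zero, List.getD_cons_zero]
      exact_mod_cast this
    obtain ⟨a₀, ha₀⟩ := hA
    have hbdd : ∀ n, (∃ l', [s, s'] <+: l' ∧ M.ConsistentFrom A F s l' ∧
        M.BConsistent A F b l' ∧ l'.length = n) → n ≤ b a₀ M.res1 + 2 := by
      rintro n ⟨l', _, _, hbc', rfl⟩
      exact M.length_bound hF ha₀ hbc'
    obtain ⟨n, ⟨lm, hpre, hcfm, hbcm, hlenm⟩, hmax⟩ :=
      nat_exists_max' hbdd ⟨[s, s'], List.prefix_refl _, hcf0, hbc0, rfl⟩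
    have hbm : M.BMaximal A F b s lm := by
      refine ⟨hcfm, hbcm, ?_⟩
      rintro ⟨l'', hp, hlt, hc, hb'⟩
      have := hmax l''.length ⟨l'', hpre.trans hp, hc, hb', rfl⟩
      omega
    have hsatm := hout lm hbm
    obtain ⟨t, rfl⟩ := hpre
    have he : (([s, s'] : List S) ++ t).getD 1 default = s' := by simp
    rw [he] at hsatm
    exact hsatm.2
  · rintro ⟨σA, hσd, hcons, hne, hsat⟩
    set F : List S → Agt → Act := fun l a =>
      if l.length = 1 ∧ l.getD 0 default = s then σA a
      else (M.d_ne (l.getD (l.length - 1) default) a).some with hFdef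
    have hFs : F [s] = σA := by
      funext a
      simp only [hFdef]
      rw [if_pos ⟨rfl, rfl⟩]
    have hF : M.Strategy A F := by
      intro l hl a ha
      by_cases hc : l.length = 1 ∧ l.getD 0 default = s
      · simp only [hFdef]
        rw [if_pos hc]
        have hgd : l.getD (l.length - 1) default = s := by rw [hc.1]; exact hc.2
        rw [hgd]
        exact hσd a ha
      · simp only [hFdef]
        rw [if_neg hc]
        exact (M.d_ne _ a).some_mem
    refine ⟨F, hF, ?_⟩
    rintro l ⟨⟨hlne, h0, hstep⟩, hbc, hmax⟩
    have h2 : 2 ≤ l.length := by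
      by_contra hlt
      push_neg at hlt
      have hl1 : l.length = 1 := by
        have : 0 < l.length := List.length_pos_iff.mpr hlne
        omega
      have hls : l = [s] := by
        cases l with
        | nil => simp at hlne
        | cons x t =>
          simp only [List.length_cons, Nat.add_eq_right] at hl1
          simp only [List.getD_cons_zero] at h0
          rw [h0, List.length_eq_zero_iff.mp hl1]
      subst hls
      obtain ⟨s', hs'⟩ := hne
      apply hmax
      refine ⟨[s, s'], ⟨[s'], rfl⟩, by simp, ?_, ?_⟩
      · refine ⟨by simp, rfl, ?_⟩
        intro i hi
        have hi0 : i = 0 := by simp at hi; omega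
        subst hi0
        simp only [zero_add, List.take_succ_cons, List.take_zero, List.getD_cons_zero,
          List.getD_cons_succ, hFs]
        exact hs'
      · intro a ha i hi ρ
        have hi0 : i = 0 := by simp at hi; omega
        subst hi0
        simp only [RBCGS.eAvail, zero_add, List.take_succ_cons, List.take_zero,
          List.getD_cons_zero, hFs]
        exact_mod_cast hcons a ha ρ
    refine ⟨h2, ?_⟩
    have hstep0 := hstep 0 (by omega)
    have ht : l.take 1 = [s] := take_one_eq h0 hlne
    simp only [zero_add] at hstep0
    rw [h0, ht, hFs] at hstep0
    exact hsat _ hstep0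
end

section
/- Fixed-point characterization of the resource-bounded Until modality (correctness of the until-strategy search): Let M be an RB-CGS#, A a nonempty coalition, b a resource bound, s a state, and φ, ψ formulas of RB±ATL#. Then M, s ⊨ ⟨⟨A^b⟩⟩ φ U ψ if and only if either M, s ⊨ ψ, or M, s ⊨ φ and there exists a joint action σ_A ∈ D_A(s) such that cons(s, (σ_A)_a) ≤ b_a componentwise for every a ∈ A, out(s, σ_A) is nonempty, and for every s' ∈ out(s, σ_A), M, s' ⊨ ⟨⟨A^{b'}⟩⟩ φ U ψ, where b'_a = b_a − cons(s, (σ_A)_a) + prod(s, (σ_A)_a) for each a ∈ A. -/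
set_option linter.unusedSectionVars false
namespace UntilFP

open RBCGS

variable {Agt S Act Res : Type} [Inhabited S]

/-- helper list lemmas -/
lemma getD_take {l : List S} {i k : ℕ} (h : i < k) (d : S) :
    (l.take k).getD i d = l.getD i d := by
  simp [List.getD_eq_getElem?_getD, List.getElem?_take, h]

lemma getD_append {l u : List S} {i : ℕ} (h : i < l.length) (d : S) :
    (l ++ u).getD i d = l.getD i d := by
  simp [List.getD_eq_getElem?_getD, List.getElem?_append, h]

lemma getD_prefix {l l' : List S} (h : l <+: l') {i : ℕ} (hi : i < l.length) (d : S) :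
    l'.getD i d = l.getD i d := by
  obtain ⟨u, rfl⟩ := h; exact getD_append hi d

lemma take_prefix_eq {l l' : List S} (h : l <+: l') {k : ℕ} (hk : k ≤ l.length) :
    l'.take k = l.take k := by
  obtain ⟨u, rfl⟩ := h
  simp [List.take_append, Nat.sub_eq_zero_of_le hk]

lemma take_ne_nil {l : List S} {k : ℕ} (h : 0 < k) (h2 : l ≠ []) : l.take k ≠ [] := by
  simp [h2, Nat.pos_iff_ne_zero.mp h]

lemma last_take {l : List S} {i : ℕ} (hi : i < l.length) (d : S) :
    (l.take (i+1)).getD ((l.take (i+1)).length - 1) d = l.getD i d := by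
  have hlen : (l.take (i+1)).length = i + 1 := by simp [Nat.succ_le_of_lt hi]
  rw [hlen]
  simpa using getD_take (Nat.lt_succ_self i) d (l := l) (k := i+1)

variable (M : RBCGS Agt S Act Res) {A : Set Agt}

/-- `eAvail` only depends on the entries and takes below `i`. -/
lemma eAvail_eq_of {F F' : List S → Agt → Act} {b : Agt → Res → ℕ} {l l' : List S} {i : ℕ}
    (hg : ∀ j < i, l.getD j default = l'.getD j default)
    (hf : ∀ j, j + 1 ≤ i → F (l.take (j+1)) = F' (l'.take (j+1))) :
    ∀ a ρ, M.eAvail F b l i a ρ = M.eAvail F' b l' i a ρ := by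
  induction i with
  | zero => intro a ρ; rfl
  | succ i ih =>
      intro a ρ
      have h1 := ih (fun j hj => hg j (hj.trans (Nat.lt_succ_self i)))
        (fun j hj => hf j (hj.trans (Nat.le_succ i)))
      simp only [RBCGS.eAvail, h1, hg i (Nat.lt_succ_self i), hf i le_rfl]

variable {b : Agt → Res → ℕ} {s : S} {F : List S → Agt → Act}

lemma eAvail_shift {t : List S} {a : Agt}
    (hc : ∀ ρ, M.consR s (F [s] a) ρ ≤ b a ρ) (i : ℕ) (ρ : Res) :
    M.eAvail F b (s :: t) (i+1) a ρ =
      M.eAvail (fun l => F (s :: l))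
        (fun a ρ => b a ρ - M.consR s (F [s] a) ρ + M.prodR s (F [s] a) ρ) t i a ρ := by
  induction i with
  | zero =>
      simp only [RBCGS.eAvail, List.take_succ_cons, List.take_zero, List.getD_cons_zero]
      have := hc ρ
      omega
  | succ i ih =>
      simp only [RBCGS.eAvail, List.take_succ_cons, List.getD_cons_succ] at ih ⊢
      rw [ih]

lemma consistentFrom_cons {t : List S} (htne : t ≠ []) :
    M.ConsistentFrom A F s (s :: t) ↔
      t.getD 0 default ∈ M.outA A s (F [s]) ∧
        M.ConsistentFrom A (fun l => F (s :: l)) (t.getD 0 default) t := by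
  constructor
  · rintro ⟨-, -, h⟩
    have h0 := h 0 (by simp [List.length_pos_iff.mpr htne])
    simp only [List.getD_cons_succ, List.getD_cons_zero, List.take_succ_cons,
      List.take_zero, zero_add] at h0
    refine ⟨h0, htne, rfl, fun i hi => ?_⟩
    have := h (i+1) (by simpa using Nat.succ_lt_succ hi)
    simpa only [List.getD_cons_succ, List.take_succ_cons] using this
  · rintro ⟨h0, -, -, h⟩
    refine ⟨by simp, by simp, fun i hi => ?_⟩
    cases i with
    | zero => simpa using h0
    | succ i =>
        have := h i (by simpa using hi)
        simpa only [List.getD_cons_succ, List.take_succ_cons] using this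

lemma bConsistent_cons {t : List S} (htne : t ≠ []) :
    M.BConsistent A F b (s :: t) ↔
      (∀ a ∈ A, ∀ ρ, M.consR s (F [s] a) ρ ≤ b a ρ) ∧
        M.BConsistent A (fun l => F (s :: l))
          (fun a ρ => b a ρ - M.consR s (F [s] a) ρ + M.prodR s (F [s] a) ρ) t := by
  constructor
  · intro h
    have hc : ∀ a ∈ A, ∀ ρ, M.consR s (F [s] a) ρ ≤ b a ρ := by
      intro a ha ρ
      have := h a ha 0 (by simp [List.length_pos_iff.mpr htne]) ρ
      simp only [List.getD_cons_zero, List.take_succ_cons, List.take_zero, zero_add,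
        RBCGS.eAvail] at this
      exact_mod_cast this
    refine ⟨hc, fun a ha i hi ρ => ?_⟩
    have := h a ha (i+1) (by simpa using Nat.succ_lt_succ hi) ρ
    rw [eAvail_shift M (hc a ha)] at this
    simpa only [List.getD_cons_succ, List.take_succ_cons] using this
  · rintro ⟨hc, h⟩
    intro a ha i hi ρ
    cases i with
    | zero =>
        simp only [List.getD_cons_zero, List.take_succ_cons, List.take_zero, zero_add,
          RBCGS.eAvail]
        exact_mod_cast hc a ha ρ
    | succ i =>
        have := h a ha i (by simpa using hi) ρ
        rw [eAvail_shift M (hc a ha)]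
        simpa only [List.getD_cons_succ, List.take_succ_cons] using this

lemma consistentFrom_prefix {l l' : List S} (h : l <+: l') (hne : l ≠ [])
    (h' : M.ConsistentFrom A F s l') : M.ConsistentFrom A F s l := by
  obtain ⟨-, h0, hstep⟩ := h'
  have hlen := h.length_le
  have hl0 : 0 < l.length := List.length_pos_iff.mpr hne
  refine ⟨hne, by rw [← getD_prefix h hl0, h0], fun i hi => ?_⟩
  have := hstep i (lt_of_lt_of_le hi hlen)
  rwa [getD_prefix h hi, getD_prefix h (Nat.lt_of_succ_lt hi),
    take_prefix_eq h (le_of_lt hi)] at this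

lemma bConsistent_prefix {l l' : List S} (h : l <+: l')
    (h' : M.BConsistent A F b l') : M.BConsistent A F b l := by
  intro a ha i hi ρ
  have heq := eAvail_eq_of M (F := F) (F' := F) (b := b) (l := l) (l' := l') (i := i)
    (fun j hj => (getD_prefix h (lt_trans hj (Nat.lt_of_succ_lt hi)) _).symm)
    (fun j hj => by rw [take_prefix_eq h (le_trans hj (le_of_lt (Nat.lt_of_succ_lt hi)))])
  have := h' a ha i (lt_of_lt_of_le hi h.length_le) ρ
  rwa [← heq a ρ, getD_prefix h (Nat.lt_of_succ_lt hi), take_prefix_eq h (le_of_lt hi)] at this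

lemma singleton_mem :
    [s] ∈ M.outSet A F b s ↔
      ¬ ((M.outA A s (F [s])).Nonempty ∧ ∀ a ∈ A, ∀ ρ, M.consR s (F [s] a) ρ ≤ b a ρ) := by
  constructor
  · rintro ⟨-, -, hmax⟩ ⟨⟨s', hs'⟩, hc⟩
    apply hmax
    refine ⟨[s, s'], ⟨[s'], rfl⟩, by simp, ?_, ?_⟩
    · refine ⟨by simp, by simp, fun i hi => ?_⟩
      have hi0 : i = 0 := by simp at hi; omega
      subst hi0
      simpa using hs'
    · intro a ha i hi ρ
      have hi0 : i = 0 := by simp at hi; omega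
      subst hi0
      simp only [RBCGS.eAvail, List.getD_cons_zero, List.take_succ_cons, List.take_zero,
        zero_add]
      exact_mod_cast hc a ha ρ
  · intro hno
    refine ⟨⟨by simp, by simp, fun i hi => absurd hi (by simp)⟩,
      fun a ha i hi => absurd hi (by simp), ?_⟩
    rintro ⟨l', hpre, hlen, hcons', hbc'⟩
    obtain ⟨u, rfl⟩ := hpre
    simp only [List.singleton_append] at *
    have hune : u ≠ [] := by
      rintro rfl; simp at hlen
    obtain ⟨h0, -⟩ := (consistentFrom_cons M hune).mp hcons'
    obtain ⟨hc, -⟩ := (bConsistent_cons M hune).mp hbc'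
    exact hno ⟨⟨_, h0⟩, hc⟩

lemma step_facts (hF : M.Strategy A F) {a : Agt} (ha : a ∈ A)
    {l : List S} {i : ℕ} (hi : i < l.length) :
    1 ≤ (M.consR (l.getD i default) (F (l.take (i+1)) a) M.res1 : ℤ) ∧
      (M.prodR (l.getD i default) (F (l.take (i+1)) a) M.res1 : ℤ) = 0 := by
  have hlne : l ≠ [] := by rintro rfl; simp at hi
  have htne : l.take (i+1) ≠ [] := take_ne_nil (Nat.succ_pos i) hlne
  have hav := hF (l.take (i+1)) htne a ha
  rw [last_take hi] at hav
  have hcost := M.cost_first _ a _ hav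
  constructor
  · have h1 : M.consR (l.getD i default) (F (l.take (i+1)) a) M.res1 =
        (M.cost (l.getD i default) (F (l.take (i+1)) a) M.res1).natAbs := by
      rw [RBCGS.consR, min_eq_right (le_trans hcost (by norm_num))]
    rw [h1]
    omega
  · rw [RBCGS.prodR, max_eq_left (le_trans hcost (by norm_num))]
    simp

lemma eAvail_le (hF : M.Strategy A F) {a : Agt} (ha : a ∈ A) {l : List S} {i : ℕ}
    (hi : i < l.length) : M.eAvail F b l i a M.res1 ≤ (b a M.res1 : ℤ) - i := by
  induction i with
  | zero => simp [RBCGS.eAvail]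
  | succ i ih =>
      have h1 := ih (Nat.lt_of_succ_lt hi)
      obtain ⟨h2, h3⟩ := step_facts M hF ha (Nat.lt_of_succ_lt hi)
      simp only [RBCGS.eAvail]
      push_cast
      omega

lemma length_le (hF : M.Strategy A F) {a : Agt} (ha : a ∈ A) {l : List S}
    (hbc : M.BConsistent A F b l) : l.length ≤ b a M.res1 + 1 := by
  by_contra hlen
  push_neg at hlen
  have h1 := hbc a ha (b a M.res1) (by omega) M.res1
  have h2 := eAvail_le M (b := b) hF ha (show b a M.res1 < l.length by omega)
  obtain ⟨h3, -⟩ := step_facts M hF ha (show b a M.res1 < l.length by omega)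
  omega

lemma exists_maximal (hF : M.Strategy A F) {a : Agt} (ha : a ∈ A) :
    ∀ n (l : List S), b a M.res1 + 2 ≤ l.length + n →
      M.ConsistentFrom A F s l → M.BConsistent A F b l →
      ∃ L, l <+: L ∧ M.BMaximal A F b s L := by
  intro n
  induction n with
  | zero =>
      intro l hlen _ hbc
      exfalso
      have := length_le M hF ha hbc
      omega
  | succ n ih =>
      intro l hlen hcons hbc
      by_cases hmax : ∃ l', l <+: l' ∧ l.length < l'.length ∧
          M.ConsistentFrom A F s l' ∧ M.BConsistent A F b l'
      · obtain ⟨l', h1, h2, h3, h4⟩ := hmax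
        obtain ⟨L, hL1, hL2⟩ := ih l' (by omega) h3 h4
        exact ⟨L, h1.trans hL1, hL2⟩
      · exact ⟨l, List.prefix_refl l, hcons, hbc, hmax⟩

lemma agree_take {F₁ F₂ : List S → Agt → Act}
    (hag : ∀ l : List S, l ≠ [] → l.getD 0 default = s → F₁ l = F₂ l)
    {l : List S} (hne : l ≠ []) (h0 : l.getD 0 default = s) (k : ℕ) :
    F₁ (l.take (k+1)) = F₂ (l.take (k+1)) :=
  hag _ (take_ne_nil (Nat.succ_pos k) hne) (by rw [getD_take (Nat.succ_pos k), h0])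

lemma consistentFrom_agree {F₁ F₂ : List S → Agt → Act}
    (hag : ∀ l : List S, l ≠ [] → l.getD 0 default = s → F₁ l = F₂ l)
    {l : List S} (h : M.ConsistentFrom A F₁ s l) : M.ConsistentFrom A F₂ s l := by
  obtain ⟨hne, h0, hstep⟩ := h
  exact ⟨hne, h0, fun i hi => by
    rw [← agree_take hag hne h0 i]; exact hstep i hi⟩

lemma bConsistent_agree {F₁ F₂ : List S → Agt → Act}
    (hag : ∀ l : List S, l ≠ [] → l.getD 0 default = s → F₁ l = F₂ l)
    {l : List S} (hne : l ≠ []) (h0 : l.getD 0 default = s)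
    (h : M.BConsistent A F₁ b l) : M.BConsistent A F₂ b l := by
  intro a ha i hi ρ
  have h1 := h a ha i hi ρ
  rw [agree_take hag hne h0 i] at h1
  rwa [eAvail_eq_of M (fun _ _ => rfl) (fun j _ => agree_take hag hne h0 j) a ρ] at h1

lemma mem_outSet_agree {F₁ F₂ : List S → Agt → Act}
    (hag : ∀ l : List S, l ≠ [] → l.getD 0 default = s → F₁ l = F₂ l)
    {l : List S} (h : l ∈ M.outSet A F₁ b s) : l ∈ M.outSet A F₂ b s := by
  obtain ⟨hcons, hbc, hmax⟩ := h
  have hne := hcons.1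
  have h0 := hcons.2.1
  have hag' : ∀ l : List S, l ≠ [] → l.getD 0 default = s → F₂ l = F₁ l :=
    fun l hn h0 => (hag l hn h0).symm
  refine ⟨consistentFrom_agree M hag hcons, bConsistent_agree M hag hne h0 hbc, ?_⟩
  rintro ⟨l', h1, h2, h3, h4⟩
  exact hmax ⟨l', h1, h2, consistentFrom_agree M hag' h3,
    bConsistent_agree M hag' h3.1 h3.2.1 h4⟩

lemma cons_mem_outSet {t : List S} (htne : t ≠ [])
    (hc : ∀ a ∈ A, ∀ ρ, M.consR s (F [s] a) ρ ≤ b a ρ) :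
    (s :: t) ∈ M.outSet A F b s ↔
      t.getD 0 default ∈ M.outA A s (F [s]) ∧
        t ∈ M.outSet A (fun l => F (s :: l))
          (fun a ρ => b a ρ - M.consR s (F [s] a) ρ + M.prodR s (F [s] a) ρ)
          (t.getD 0 default) := by
  constructor
  · rintro ⟨hcons, hbc, hmax⟩
    obtain ⟨h0, hconsT⟩ := (consistentFrom_cons M htne).mp hcons
    obtain ⟨-, hbcT⟩ := (bConsistent_cons M htne).mp hbc
    refine ⟨h0, hconsT, hbcT, ?_⟩
    rintro ⟨t', h1, h2, h3, h4⟩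
    have ht'ne : t' ≠ [] := by
      rintro rfl; simp at h2
    have hhead : t'.getD 0 default = t.getD 0 default :=
      getD_prefix h1 (List.length_pos_iff.mpr htne) _
    apply hmax
    refine ⟨s :: t', List.cons_prefix_cons.mpr ⟨rfl, h1⟩, by simpa using h2,
      (consistentFrom_cons M ht'ne).mpr ⟨?_, ?_⟩, (bConsistent_cons M ht'ne).mpr ⟨hc, h4⟩⟩
    · rw [hhead]; exact h0
    · rw [hhead]; exact h3
  · rintro ⟨h0, hconsT, hbcT, hmaxT⟩
    refine ⟨(consistentFrom_cons M htne).mpr ⟨h0, hconsT⟩,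
      (bConsistent_cons M htne).mpr ⟨hc, hbcT⟩, ?_⟩
    rintro ⟨l', h1, h2, h3, h4⟩
    obtain ⟨u, rfl⟩ := h1
    rw [List.cons_append] at h2 h3 h4
    have ht'ne : t ++ u ≠ [] := by
      simp [htne]
    obtain ⟨-, hconsT'⟩ := (consistentFrom_cons M ht'ne).mp h3
    obtain ⟨-, hbcT'⟩ := (bConsistent_cons M ht'ne).mp h4
    have hhead : (t ++ u).getD 0 default = t.getD 0 default :=
      getD_append (List.length_pos_iff.mpr htne) _
    apply hmaxT
    refine ⟨t ++ u, ⟨u, rfl⟩, by simp at h2 ⊢; omega, ?_, hbcT'⟩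
    rw [← hhead]; exact hconsT'

noncomputable def arbStrat (M : RBCGS Agt S Act Res) : List S → Agt → Act :=
  fun l a => (M.d_ne (l.getD (l.length - 1) default) a).some

lemma arbStrat_strategy (A : Set Agt) : M.Strategy A (arbStrat M) :=
  fun _ _ _ _ => (M.d_ne _ _).some_mem

def glue [DecidableEq S] (s : S) (σA : Agt → Act) (G : S → List S → Agt → Act)
    (arb : List S → Agt → Act) : List S → Agt → Act
  | [] => arb []
  | [x] => if x = s then σA else arb [x]
  | _ :: s' :: rest => G s' (s' :: rest)

lemma glue_single [DecidableEq S] (s : S) (σA : Agt → Act) (G : S → List S → Agt → Act)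
    (arb : List S → Agt → Act) : glue s σA G arb [s] = σA := by
  simp [glue]

lemma glue_cons [DecidableEq S] (s : S) (σA : Agt → Act) (G : S → List S → Agt → Act)
    (arb : List S → Agt → Act) (x y : S) (rest : List S) :
    glue s σA G arb (x :: y :: rest) = G y (y :: rest) := rfl

end UntilFP

open UntilFP in
/-- Fixed-point characterization of the resource-bounded Until modality
(correctness of the until-strategy search). -/
theorem until_fixed_point {Agt S Act Res P : Type} [Inhabited S]
    (M : RBCGS Agt S Act Res) (V : P → S → Prop)
    (A : Set Agt) (hA : A.Nonempty) (b : Agt → Res → ℕ) (s : S)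
    (φ ψ : RBForm Agt Res P) :
    M.Sat V (.untl A b φ ψ) s ↔
      M.Sat V ψ s ∨
        (M.Sat V φ s ∧
          ∃ σA : Agt → Act, (∀ a ∈ A, σA a ∈ M.d s a) ∧
            (∀ a ∈ A, ∀ ρ : Res, M.consR s (σA a) ρ ≤ b a ρ) ∧
            (M.outA A s σA).Nonempty ∧
            ∀ s' ∈ M.outA A s σA,
              M.Sat V
                (.untl A (fun a ρ => b a ρ - M.consR s (σA a) ρ + M.prodR s (σA a) ρ) φ ψ)
                s') := by
  classical
  obtain ⟨a₀, ha₀⟩ := hA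
  simp only [RBCGS.Sat]
  constructor
  · rintro ⟨F, hF, hout⟩
    by_cases hψ : M.Sat V ψ s
    · exact Or.inl hψ
    right
    have hsing : [s] ∉ M.outSet A F b s := by
      intro hmem
      obtain ⟨i, hi, hψi, -⟩ := hout [s] hmem
      have hi0 : i = 0 := by simpa using Nat.lt_one_iff.mp (by simpa using hi)
      subst hi0
      simp only [List.getD_cons_zero] at hψi
      exact hψ hψi
    have hkey : (M.outA A s (F [s])).Nonempty ∧ ∀ a ∈ A, ∀ ρ, M.consR s (F [s] a) ρ ≤ b a ρ := by
      by_contra hno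
      exact hsing ((singleton_mem M).mpr hno)
    obtain ⟨hne_out, hc⟩ := hkey
    have hφs : M.Sat V φ s := by
      obtain ⟨L, hpre, hmax⟩ := exists_maximal M (b := b) (s := s) hF ha₀ (b a₀ M.res1 + 2) [s]
        (by simp only [List.length_singleton]; omega)
        ⟨by simp, by simp, fun i hi => absurd hi (by simp)⟩
        (fun a ha i hi => absurd hi (by simp))
      obtain ⟨i, hi, hψi, hφj⟩ := hout L hmax
      have hL0 : L.getD 0 default = s := hmax.1.2.1
      have hipos : 0 < i := by
        rcases Nat.eq_zero_or_pos i with h | h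
        · subst h; rw [hL0] at hψi; exact absurd hψi hψ
        · exact h
      have := hφj 0 hipos
      rwa [hL0] at this
    refine ⟨hφs, F [s], ?_, hc, hne_out, ?_⟩
    · have := hF [s] (by simp)
      simpa [RBCGS.JointAt] using this
    · intro s' hs'
      refine ⟨fun l => F (s :: l), ?_, ?_⟩
      · intro l hlne
        have h1 := hF (s :: l) (by simp)
        have hidx : (s :: l).getD ((s :: l).length - 1) default
            = l.getD (l.length - 1) default := by
          have hl0 : (s :: l).length - 1 = (l.length - 1) + 1 := by
            have := List.length_pos_iff.mpr hlne
            simp only [List.length_cons]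
            omega
          rw [hl0, List.getD_cons_succ]
        rwa [hidx] at h1
      · intro t ht
        have htne : t ≠ [] := ht.1.1
        have ht0 : t.getD 0 default = s' := ht.1.2.1
        have hmem : (s :: t) ∈ M.outSet A F b s :=
          (cons_mem_outSet M htne hc).mpr ⟨by rw [ht0]; exact hs', by rw [ht0]; exact ht⟩
        obtain ⟨i, hi, hψi, hφj⟩ := hout (s :: t) hmem
        cases i with
        | zero =>
            rw [List.getD_cons_zero] at hψi
            exact absurd hψi hψ
        | succ i =>
            refine ⟨i, by simpa using hi, by simpa using hψi, fun j hj => ?_⟩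
            have := hφj (j+1) (Nat.succ_lt_succ hj)
            simpa using this
  · rintro (hψs | ⟨hφs, σA, hJ, hc, ⟨s₀, hs₀⟩, hrec⟩)
    · refine ⟨arbStrat M, arbStrat_strategy M A, ?_⟩
      intro l hl
      exact ⟨0, List.length_pos_iff.mpr hl.1.1, by rw [hl.1.2.1]; exact hψs,
        fun j hj => absurd hj (by omega)⟩
    · have hGex : ∀ s', ∃ Fs, M.Strategy A Fs ∧ (s' ∈ M.outA A s σA →
          ∀ l ∈ M.outSet A Fs
            (fun a ρ => b a ρ - M.consR s (σA a) ρ + M.prodR s (σA a) ρ) s',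
          ∃ i < l.length, M.Sat V ψ (l.getD i default) ∧
            ∀ j < i, M.Sat V φ (l.getD j default)) := by
        intro s'
        by_cases h : s' ∈ M.outA A s σA
        · obtain ⟨Fs, h1, h2⟩ := hrec s' h
          exact ⟨Fs, h1, fun _ => h2⟩
        · exact ⟨arbStrat M, arbStrat_strategy M A, fun h' => absurd h' h⟩
      choose G hG₁ hG₂ using hGex
      refine ⟨glue s σA G (arbStrat M), ?_, ?_⟩
      · intro l hl
        match l with
        | [x] =>
            by_cases hx : x = s
            · subst hx
              rw [glue_single]
              simpa [RBCGS.JointAt] using hJ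
            · rw [show glue s σA G (arbStrat M) [x] = arbStrat M [x] by
                simp [glue, hx]]
              exact arbStrat_strategy M A [x] (by simp)
        | x :: y :: rest =>
            rw [glue_cons]
            have := hG₁ y (y :: rest) (by simp)
            simpa using this
      · intro l hl
        have hlne : l ≠ [] := hl.1.1
        have hl0 : l.getD 0 default = s := hl.1.2.1
        match l, hlne with
        | x :: t, _ =>
          have hx : x = s := by simpa using hl0
          subst hx
          have hFs : glue x σA G (arbStrat M) [x] = σA := glue_single ..
          match t with
          | [] =>
              exfalso
              have h1 := (singleton_mem M).mp hl
              rw [hFs] at h1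
              exact h1 ⟨⟨s₀, hs₀⟩, hc⟩
          | y :: rest =>
              have htne : (y :: rest) ≠ [] := by simp
              have hc' : ∀ a ∈ A, ∀ ρ,
                  M.consR x (glue x σA G (arbStrat M) [x] a) ρ ≤ b a ρ := by
                rw [hFs]; exact hc
              obtain ⟨hout1, hout2⟩ := (cons_mem_outSet M htne hc').mp hl
              rw [hFs] at hout1 hout2
              simp only [List.getD_cons_zero] at hout1 hout2
              have hag : ∀ l : List S, l ≠ [] → l.getD 0 default = y →
                  (fun l => glue x σA G (arbStrat M) (x :: l)) l = G y l := by
                intro l hln h0'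
                match l with
                | z :: rest' =>
                    have hz : z = y := by simpa using h0'
                    subst hz
                    rfl
              have hmem := mem_outSet_agree M hag hout2
              obtain ⟨i, hi, hψi, hφj⟩ := hG₂ y hout1 (y :: rest) hmem
              refine ⟨i + 1, by simpa using Nat.succ_lt_succ hi, by simpa using hψi,
                fun j hj => ?_⟩
              match j with
              | 0 => simpa using hφs
              | j + 1 =>
                  have := hφj j (Nat.lt_of_succ_lt_succ hj)
                  simpa using this
end

section
/- Length bound for RAL# resource-extended computations: Let M be an RB-CGS#, A a coalition of proponents, B a set of resource-bounded opponents with A ∪ B nonempty, F_A a strategy for A, η an endowment, and s a state. Then every (η, F_A, B)-computation from s has length at most (min_{a ∈ A∪B} η_a(res₁)) + 1, where η_a(res₁) is agent a's endowment of the first (diminishing) resource. -/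
namespace RBCGS

variable {Agt S Act Res : Type} [Inhabited S]

/-- An endowment assigns to each agent a vector of natural-number resource amounts. -/
abbrev Endow (Agt Res : Type) : Type := Agt → Res → ℕ

/-- `RalComp M A B F s η l` : l is an (η, F_A, B)-computation from s, i.e. a
resource-extended computation (a nonempty finite sequence of state–endowment pairs,
0-based) where A are the proponents following strategy F and B the resource-bounded
opponents. -/
def RalComp (M : RBCGS Agt S Act Res) (A B : Set Agt) (F : List S → Agt → Act)
    (s : S) (η : Endow Agt Res) (l : List (S × Endow Agt Res)) : Prop :=
  l ≠ [] ∧ l.getD 0 default = (s, η) ∧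
    ∀ i, i + 1 < l.length → ∃ σ : Agt → Act,
      (∀ a, σ a ∈ M.d (l.getD i default).1 a) ∧
      (∀ a ∈ A, σ a = F ((l.map Prod.fst).take (i + 1)) a) ∧
      M.tr (l.getD i default).1 σ = some (l.getD (i + 1) default).1 ∧
      (∀ a ∈ A ∪ B, ∀ ρ : Res,
        M.consR (l.getD i default).1 (σ a) ρ ≤ (l.getD i default).2 a ρ) ∧
      (∀ a ∈ A ∪ B, ∀ ρ : Res,
        ((l.getD (i + 1) default).2 a ρ : ℤ) =
          ((l.getD i default).2 a ρ : ℤ)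
            + (M.prodR (l.getD i default).1 (σ a) ρ : ℤ)
            - (M.consR (l.getD i default).1 (σ a) ρ : ℤ)) ∧
      (∀ a, a ∉ A ∪ B → ∀ ρ : Res,
        (l.getD (i + 1) default).2 a ρ = (l.getD i default).2 a ρ)

/-- `out(s, η, F_A, B)` : the set of maximal (η, F_A, B)-computations from s. -/
def ralOut (M : RBCGS Agt S Act Res) (A B : Set Agt) (F : List S → Agt → Act)
    (s : S) (η : Endow Agt Res) : Set (List (S × Endow Agt Res)) :=
  { l | M.RalComp A B F s η l ∧
      ¬ ∃ l', l <+: l' ∧ l.length < l'.length ∧ M.RalComp A B F s η l' }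

end RBCGS

/-- Formulas of RAL#: each modality carries proponents A and resource-bounded opponents
B, and is either of the down-arrow (current endowment) kind or carries a fresh
endowment ζ. -/
inductive RALForm (Agt Res P : Type) : Type 1 where
  | prop : P → RALForm Agt Res P
  | neg : RALForm Agt Res P → RALForm Agt Res P
  | and : RALForm Agt Res P → RALForm Agt Res P → RALForm Agt Res P
  | nxtD : Set Agt → Set Agt → RALForm Agt Res P → RALForm Agt Res P
  | nxtE : Set Agt → Set Agt → (Agt → Res → ℕ) → RALForm Agt Res P → RALForm Agt Res P
  | untlD : Set Agt → Set Agt → RALForm Agt Res P → RALForm Agt Res P → RALForm Agt Res P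
  | untlE : Set Agt → Set Agt → (Agt → Res → ℕ) → RALForm Agt Res P → RALForm Agt Res P →
      RALForm Agt Res P
  | rlsD : Set Agt → Set Agt → RALForm Agt Res P → RALForm Agt Res P → RALForm Agt Res P
  | rlsE : Set Agt → Set Agt → (Agt → Res → ℕ) → RALForm Agt Res P → RALForm Agt Res P →
      RALForm Agt Res P

namespace RBCGS

variable {Agt S Act Res P : Type} [Inhabited S]

/-- Truth of a RAL# formula at a state and an endowment (`M, s, η ⊨ φ`). -/
def SatR (M : RBCGS Agt S Act Res) (V : P → S → Prop) :
    RALForm Agt Res P → S → Endow Agt Res → Prop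
  | .prop p, s, _ => V p s
  | .neg φ, s, η => ¬ SatR M V φ s η
  | .and φ ψ, s, η => SatR M V φ s η ∧ SatR M V ψ s η
  | .nxtD A B φ, s, η => ∃ F, M.Strategy A F ∧
      ∀ l ∈ M.ralOut A B F s η, 2 ≤ l.length ∧
        SatR M V φ (l.getD 1 default).1 (l.getD 1 default).2
  | .nxtE A B ζ φ, s, _ => ∃ F, M.Strategy A F ∧
      ∀ l ∈ M.ralOut A B F s ζ, 2 ≤ l.length ∧
        SatR M V φ (l.getD 1 default).1 (l.getD 1 default).2
  | .untlD A B φ ψ, s, η => ∃ F, M.Strategy A F ∧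
      ∀ l ∈ M.ralOut A B F s η, ∃ i < l.length,
        SatR M V ψ (l.getD i default).1 (l.getD i default).2 ∧
          ∀ j < i, SatR M V φ (l.getD j default).1 (l.getD j default).2
  | .untlE A B ζ φ ψ, s, _ => ∃ F, M.Strategy A F ∧
      ∀ l ∈ M.ralOut A B F s ζ, ∃ i < l.length,
        SatR M V ψ (l.getD i default).1 (l.getD i default).2 ∧
          ∀ j < i, SatR M V φ (l.getD j default).1 (l.getD j default).2
  | .rlsD A B φ ψ, s, η => ∃ F, M.Strategy A F ∧
      ∀ l ∈ M.ralOut A B F s η,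
        (∃ i < l.length,
          SatR M V φ (l.getD i default).1 (l.getD i default).2 ∧
          SatR M V ψ (l.getD i default).1 (l.getD i default).2 ∧
          ∀ j ≤ i, SatR M V ψ (l.getD j default).1 (l.getD j default).2) ∨
        (∀ j < l.length, SatR M V ψ (l.getD j default).1 (l.getD j default).2)
  | .rlsE A B ζ φ ψ, s, _ => ∃ F, M.Strategy A F ∧
      ∀ l ∈ M.ralOut A B F s ζ,
        (∃ i < l.length,
          SatR M V φ (l.getD i default).1 (l.getD i default).2 ∧
          SatR M V ψ (l.getD i default).1 (l.getD i default).2 ∧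
          ∀ j ≤ i, SatR M V ψ (l.getD j default).1 (l.getD j default).2) ∨
        (∀ j < l.length, SatR M V ψ (l.getD j default).1 (l.getD j default).2)

end RBCGS

/-- All proponent coalitions occurring in a RAL# formula are nonempty. -/
def RALForm.goodCoal {Agt Res P : Type} : RALForm Agt Res P → Prop
  | .prop _ => True
  | .neg φ => φ.goodCoal
  | .and φ ψ => φ.goodCoal ∧ ψ.goodCoal
  | .nxtD A _ φ => A.Nonempty ∧ φ.goodCoal
  | .nxtE A _ _ φ => A.Nonempty ∧ φ.goodCoal
  | .untlD A _ φ ψ => A.Nonempty ∧ φ.goodCoal ∧ ψ.goodCoal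
  | .untlE A _ _ φ ψ => A.Nonempty ∧ φ.goodCoal ∧ ψ.goodCoal
  | .rlsD A _ φ ψ => A.Nonempty ∧ φ.goodCoal ∧ ψ.goodCoal
  | .rlsE A _ _ φ ψ => A.Nonempty ∧ φ.goodCoal ∧ ψ.goodCoal

/-- Length bound for RAL# resource-extended computations: every
(η, F_A, B)-computation from s has length at most `min_{a ∈ A∪B} η_a(res₁) + 1`. -/
theorem ral_length_bound {Agt S Act Res : Type} [Inhabited S]
    (M : RBCGS Agt S Act Res) (A B : Set Agt) (hAB : (A ∪ B).Nonempty)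
    (F : List S → Agt → Act) (hF : M.Strategy A F)
    (η : RBCGS.Endow Agt Res) (s : S)
    (l : List (S × RBCGS.Endow Agt Res)) (hl : M.RalComp A B F s η l) :
    l.length ≤ sInf ((fun a => η a M.res1) '' (A ∪ B)) + 1 := by
  obtain ⟨hne, h0, hstep⟩ := hl
  have hSne : ((fun a => η a M.res1) '' (A ∪ B)).Nonempty := hAB.image _
  obtain ⟨a, haAB, ha⟩ := Nat.sInf_mem hSne
  -- the key invariant: endowment of a at step i plus i is at most η a res1
  have key : ∀ i, i < l.length →
      ((l.getD i default).2 a M.res1 : ℤ) + i ≤ (η a M.res1 : ℤ) := by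
    intro i
    induction i with
    | zero =>
      intro _
      rw [h0]
      simp
    | succ i ih =>
      intro hi1
      have hi : i < l.length := Nat.lt_of_succ_lt hi1
      obtain ⟨σ, hσd, _, _, hcons, hupd, _⟩ := hstep i hi1
      have hcost : M.cost (l.getD i default).1 (σ a) M.res1 ≤ -1 :=
        M.cost_first _ _ _ (hσd a)
      have hprod : M.prodR (l.getD i default).1 (σ a) M.res1 = 0 := by
        unfold RBCGS.prodR
        have : max 0 (M.cost (l.getD i default).1 (σ a) M.res1) = 0 := by omega
        rw [this]
        simp
      have hconsr : 1 ≤ M.consR (l.getD i default).1 (σ a) M.res1 := by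
        unfold RBCGS.consR
        have : min 0 (M.cost (l.getD i default).1 (σ a) M.res1)
            = M.cost (l.getD i default).1 (σ a) M.res1 := by omega
        rw [this]
        omega
      have heq := hupd a haAB M.res1
      have hih := ih hi
      rw [heq, hprod]
      push_cast
      push_cast at hih
      omega
  -- apply at the last index
  have hlen : l.length - 1 < l.length := by
    have : 0 < l.length := List.length_pos_iff.mpr hne
    omega
  have hk := key (l.length - 1) hlen
  have hnn : (0 : ℤ) ≤ ((l.getD (l.length - 1) default).2 a M.res1 : ℤ) := by
    positivity
  have ha' : η a M.res1 = sInf ((fun a => η a M.res1) '' (A ∪ B)) := ha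
  omega
end

section
/- Finiteness and nonemptiness of RAL# outcome sets: Let M be an RB-CGS# with Act finite, A a coalition of proponents, B a set of resource-bounded opponents with A ∪ B nonempty, F_A a strategy for A, η an endowment, and s a state. Then the set out(s, η, F_A, B) of maximal (η, F_A, B)-computations from s is finite and nonempty, and every (η, F_A, B)-computation from s is a prefix of some member of out(s, η, F_A, B). -/
namespace RalAux
open RBCGS

lemma getD_take {α : Type*} [Inhabited α] (l : List α) {i n : ℕ} (h : i < n) :
    (l.take n).getD i default = l.getD i default := by
  simp [List.getD_eq_getElem?_getD, List.getElem?_take, h]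

lemma getD_prefix {α : Type*} [Inhabited α] {l l' : List α} (h : l <+: l') {i : ℕ}
    (hi : i < l.length) : l'.getD i default = l.getD i default := by
  obtain ⟨t, rfl⟩ := h
  simp [List.getD_eq_getElem?_getD, List.getElem?_append, hi]

lemma eq_take_append {α : Type*} [Inhabited α] (l : List α) (n : ℕ) (h : l.length = n + 1) :
    l = l.take n ++ [l.getD n default] := by
  conv_lhs => rw [← List.take_append_drop n l]
  congr 1
  have h1 : (l.drop n).length = 1 := by simp [h]
  match hd : l.drop n, h1 with
  | [a], _ =>
    have : l[n]? = some a := by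
      have : (l.drop n)[0]? = l[n + 0]? := List.getElem?_drop
      rw [hd] at this; simpa using this.symm
    simp [List.getD_eq_getElem?_getD, this]

variable {Agt S Act Res : Type} [Inhabited S]
variable {M : RBCGS Agt S Act Res} {A B : Set Agt} {F : List S → Agt → Act}
  {η : Endow Agt Res} {s : S}

/-- take of a map-fst agrees along a prefix -/
lemma mapfst_take_prefix {l l' : List (S × Endow Agt Res)} (h : l <+: l') {k : ℕ}
    (hk : k ≤ l.length) :
    (l'.map Prod.fst).take k = (l.map Prod.fst).take k := by
  obtain ⟨t, rfl⟩ := h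
  rw [List.map_append, List.take_append_of_le_length (by simpa using hk)]

lemma ralComp_prefix {l l' : List (S × Endow Agt Res)} (hl' : M.RalComp A B F s η l')
    (h : l <+: l') (hne : l ≠ []) : M.RalComp A B F s η l := by
  refine ⟨hne, ?_, ?_⟩
  · rw [← hl'.2.1, getD_prefix h (by simpa [List.length_pos_iff] using hne)]
  · intro i hi
    obtain ⟨σ, h1, h2, h3, h4, h5, h6⟩ := hl'.2.2 i (lt_of_lt_of_le hi h.length_le)
    rw [getD_prefix h hi, getD_prefix h (by omega), mapfst_take_prefix h (by omega)] at *
    exact ⟨σ, h1, h2, h3, h4, h5, h6⟩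

/-- the diminishing-resource bound on endowments along a computation -/
lemma endow_bound {a₀ : Agt} (ha₀ : a₀ ∈ A ∪ B) {l : List (S × Endow Agt Res)}
    (hl : M.RalComp A B F s η l) :
    ∀ i, i < l.length → ((l.getD i default).2 a₀ M.res1 : ℤ) + i ≤ (η a₀ M.res1 : ℤ) := by
  intro i
  induction i with
  | zero => intro _; rw [hl.2.1]; simp
  | succ i ih =>
    intro h
    have hi : i < l.length := by omega
    obtain ⟨σ, hσd, -, -, hcons, heq, -⟩ := hl.2.2 i h
    have hc := M.cost_first _ a₀ _ (hσd a₀)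
    have hcons1 : (1:ℤ) ≤ (M.consR (l.getD i default).1 (σ a₀) M.res1 : ℤ) := by
      unfold RBCGS.consR
      rw [min_eq_right (by linarith)]
      omega
    have hprod0 : M.prodR (l.getD i default).1 (σ a₀) M.res1 = 0 := by
      unfold RBCGS.prodR
      rw [max_eq_left (by linarith)]
      simp
    have he := heq a₀ ha₀ M.res1
    rw [hprod0] at he
    have := ih hi
    push_cast at *
    omega

lemma ralComp_length_le {a₀ : Agt} (ha₀ : a₀ ∈ A ∪ B) {l : List (S × Endow Agt Res)}
    (hl : M.RalComp A B F s η l) : l.length ≤ η a₀ M.res1 + 1 := by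
  have hne := hl.1
  have hpos : 0 < l.length := List.length_pos_iff.2 hne
  have := endow_bound ha₀ hl (l.length - 1) (by omega)
  have h0 : (0:ℤ) ≤ ((l.getD (l.length - 1) default).2 a₀ M.res1 : ℤ) := Int.ofNat_nonneg _
  omega

open Classical in
/-- the unique successor pair determined by a joint action -/
noncomputable def stepPair (M : RBCGS Agt S Act Res) (A B : Set Agt)
    (p : S × Endow Agt Res) (σ : Agt → Act) : S × Endow Agt Res :=
  ((M.tr p.1 σ).getD default,
   fun a ρ => if a ∈ A ∪ B then p.2 a ρ + M.prodR p.1 (σ a) ρ - M.consR p.1 (σ a) ρ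
     else p.2 a ρ)

lemma getD_succ_eq_stepPair {l : List (S × Endow Agt Res)} (hl : M.RalComp A B F s η l)
    {i : ℕ} (h : i + 1 < l.length) :
    ∃ σ : Agt → Act, l.getD (i + 1) default = stepPair M A B (l.getD i default) σ := by
  obtain ⟨σ, hσd, -, h3, hcons, heq, hfix⟩ := hl.2.2 i h
  refine ⟨σ, Prod.ext ?_ (funext fun a => funext fun ρ => ?_)⟩
  · show (l.getD (i + 1) default).1 = (M.tr (l.getD i default).1 σ).getD default
    rw [h3, Option.getD_some]
  · simp only [stepPair]
    by_cases ha : a ∈ A ∪ B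
    · rw [if_pos ha]
      have := heq a ha ρ
      have := hcons a ha ρ
      omega
    · rw [if_neg ha]
      exact hfix a ha ρ

/-- the set of computations with a given length is finite -/
lemma finite_fixed_length [Fintype Agt] [Fintype Act] (n : ℕ) :
    {l : List (S × Endow Agt Res) | M.RalComp A B F s η l ∧ l.length = n}.Finite := by
  induction n with
  | zero =>
    convert Set.finite_empty
    ext l
    simp only [Set.mem_setOf_eq, Set.mem_empty_iff_false, iff_false]
    rintro ⟨hl, h0⟩
    exact hl.1 (List.length_eq_zero_iff.1 h0)
  | succ n ih =>
    rcases Nat.eq_zero_or_pos n with rfl | hn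
    · apply Set.Finite.subset (Set.finite_singleton [(s, η)])
      rintro l ⟨hl, h1⟩
      have := eq_take_append l 0 h1
      simp only [List.take_zero, List.nil_append] at this
      rw [this, hl.2.1]
      rfl
    · apply Set.Finite.subset
        ((ih.prod (Set.finite_univ : (Set.univ : Set (Agt → Act)).Finite)).image
          (fun q : List (S × Endow Agt Res) × (Agt → Act) =>
            q.1 ++ [stepPair M A B (q.1.getD (n - 1) default) q.2]))
      rintro l ⟨hl, hlen⟩
      obtain ⟨m, rfl⟩ : ∃ m, n = m + 1 := ⟨n - 1, by omega⟩
      have htake : l.take (m + 1) <+: l := List.take_prefix _ _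
      have htlen : (l.take (m + 1)).length = m + 1 := by simp [hlen]
      have htc : M.RalComp A B F s η (l.take (m + 1)) :=
        ralComp_prefix hl htake (by
          intro h; rw [h] at htlen; simp at htlen)
      obtain ⟨σ, hσ⟩ := getD_succ_eq_stepPair hl (show m + 1 < l.length by omega)
      refine ⟨(l.take (m + 1), σ), ⟨⟨htc, htlen⟩, Set.mem_univ _⟩, ?_⟩
      simp only
      rw [show m + 1 - 1 = m from rfl, getD_take l (show m < m + 1 by omega), ← hσ]
      exact (eq_take_append l (m + 1) hlen).symm

lemma ralComp_finite [Fintype Agt] [Fintype Act] (hAB : (A ∪ B).Nonempty) :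
    {l : List (S × Endow Agt Res) | M.RalComp A B F s η l}.Finite := by
  obtain ⟨a₀, ha₀⟩ := hAB
  apply Set.Finite.subset
    (Set.Finite.biUnion (Set.finite_Icc 0 (η a₀ M.res1 + 1))
      (fun n _ => finite_fixed_length (M := M) (A := A) (B := B) (F := F) (η := η) (s := s) n))
  intro l hl
  exact Set.mem_biUnion ⟨Nat.zero_le _, ralComp_length_le ha₀ hl⟩ ⟨hl, rfl⟩

lemma exists_maximal (hAB : (A ∪ B).Nonempty) {l : List (S × Endow Agt Res)}
    (hl : M.RalComp A B F s η l) : ∃ l' ∈ M.ralOut A B F s η, l <+: l' := by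
  obtain ⟨a₀, ha₀⟩ := hAB
  set N := η a₀ M.res1 + 1 with hN
  have H : ∀ k (l : List (S × Endow Agt Res)), M.RalComp A B F s η l → N - l.length ≤ k →
      ∃ l' ∈ M.ralOut A B F s η, l <+: l' := by
    intro k
    induction k with
    | zero =>
      intro l hl hk
      refine ⟨l, ⟨hl, ?_⟩, List.prefix_refl l⟩
      rintro ⟨l'', -, hlen, hl''⟩
      have := ralComp_length_le ha₀ hl''
      omega
    | succ k ih =>
      intro l hl hk
      by_cases hmax : ∃ l'', l <+: l'' ∧ l.length < l''.length ∧ M.RalComp A B F s η l''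
      · obtain ⟨l'', hpre, hlen, hc⟩ := hmax
        obtain ⟨l', hout, hp⟩ := ih l'' hc (by omega)
        exact ⟨l', hout, hpre.trans hp⟩
      · exact ⟨l, ⟨hl, hmax⟩, List.prefix_refl l⟩
  exact H (N - l.length) l hl le_rfl

lemma singleton_ralComp : M.RalComp A B F s η [(s, η)] :=
  ⟨by simp, rfl, by intro i h; simp at h⟩

end RalAux
/-- Finiteness and nonemptiness of RAL# outcome sets (Act finite): the set
of maximal (η, F_A, B)-computations from s is finite and nonempty and every
(η, F_A, B)-computation from s is a prefix of some member of it. -/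
theorem ral_out_finite_nonempty {Agt S Act Res : Type} [Inhabited S]
    [Fintype Agt] [Fintype Act]
    (M : RBCGS Agt S Act Res) (A B : Set Agt) (hAB : (A ∪ B).Nonempty)
    (F : List S → Agt → Act) (hF : M.Strategy A F)
    (η : RBCGS.Endow Agt Res) (s : S) :
    (M.ralOut A B F s η).Finite ∧ (M.ralOut A B F s η).Nonempty ∧
      ∀ l : List (S × RBCGS.Endow Agt Res), M.RalComp A B F s η l →
        ∃ l' ∈ M.ralOut A B F s η, l <+: l' := by
  obtain ⟨l0, hout, -⟩ := RalAux.exists_maximal hAB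
    (RalAux.singleton_ralComp (M := M) (A := A) (B := B) (F := F) (s := s) (η := η))
  exact ⟨Set.Finite.subset (RalAux.ralComp_finite hAB) (fun l hl => hl.1), ⟨l0, hout⟩,
    fun l hl => RalAux.exists_maximal hAB hl⟩
end

section
/- Run-out-of-resources sufficiency for RAL# Release: Let M be an RB-CGS#, A a nonempty coalition of proponents, B a set of resource-bounded opponents, s a state, η an endowment, and φ, ψ formulas of RAL#. If ψ holds at (M, s, η) and there exists a joint action σ_A ∈ D_A(s) such that cons(s, (σ_A)_a) ≤ η_a fails for some a ∈ A, then M, s, η ⊨ ⟨⟨A⟩⟩↓_B φ R ψ. -/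
/-- Run-out-of-resources sufficiency for RAL# Release: if ψ holds at
(M, s, η) and some joint action of A available at s is unaffordable for some a ∈ A under
η, then `M, s, η ⊨ ⟨⟨A⟩⟩↓_B φ R ψ`. -/
theorem ral_release_run_out_sufficiency {Agt S Act Res P : Type} [Inhabited S]
    (M : RBCGS Agt S Act Res) (V : P → S → Prop)
    (A B : Set Agt) (hA : A.Nonempty) (s : S) (η : RBCGS.Endow Agt Res)
    (φ ψ : RALForm Agt Res P)
    (hψ : M.SatR V ψ s η)
    (hσ : ∃ σA : Agt → Act, (∀ a ∈ A, σA a ∈ M.d s a) ∧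
      ∃ a ∈ A, ∃ ρ : Res, ¬ M.consR s (σA a) ρ ≤ η a ρ) :
    M.SatR V (.rlsD A B φ ψ) s η := by
  obtain ⟨σA, hav, a0, ha0, ρ0, hbad⟩ := hσ
  classical
  refine ⟨fun l b =>
    if h : l.getD (l.length - 1) default = s then σA b
    else (M.d_ne (l.getD (l.length - 1) default) b).choose, ?_, ?_⟩
  · intro l _ b hb
    by_cases h : l.getD (l.length - 1) default = s
    · simp only [h, dif_pos]
      exact hav b hb
    · simp only [h, dif_neg, not_false_iff]
      exact (M.d_ne (l.getD (l.length - 1) default) b).choose_spec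
  · rintro l ⟨⟨hne, h0, hstep⟩, -⟩
    have hlen1 : l.length = 1 := by
      rcases Nat.lt_or_ge l.length 2 with h2 | h2
      · have := List.length_pos_iff.mpr hne
        omega
      · exfalso
        obtain ⟨σ, hσd, hσA, htr, hcons, -, -⟩ := hstep 0 (by omega)
        have hmap : ((l.map Prod.fst).take 1) = [s] := by
          cases l with
          | nil => simp at hne
          | cons x xs =>
            simp only [List.map_cons, List.take_succ_cons, List.take_zero]
            have : x = (s, η) := by simpa using h0
            simp [this]
        have hF : σ a0 = σA a0 := by
          rw [hσA a0 ha0, hmap]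
          simp
        have := hcons a0 (Or.inl ha0) ρ0
        rw [hF, h0] at this
        exact hbad this
    right
    intro j hj
    have : j = 0 := by omega
    subst this
    rw [h0]
    exact hψ
end
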